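/- Let n ≥ 3, y : Fin n → ℝ nonzero, and c : Fin n → Fin n → ℝ antisymmetric. If there exists α : Fin n → ℝ such that c_{jk} y^l = α_j δ^l_k − α_k δ^l_j for all l,j,k ∈ Fin n, then c = 0 and α = 0. -/
import Mathlib

lemma exists_third (n : ℕ) (hn : 3 ≤ n) (a b : Fin n) :
    ∃ l : Fin n, l ≠ a ∧ l ≠ b := by
  by_contra hcon
  push_neg at hcon
  have hsub : (Finset.univ : Finset (Fin n)) ⊆ {a, b} := by
    intro x _
    by_cases h1 : x = a
    · simp [h1]
    · simp [hcon x h1]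
  have := Finset.card_le_card hsub
  simp [Finset.card_univ] at this
  have h2 : ({a, b} : Finset (Fin n)).card ≤ 2 :=
    Finset.card_insert_le a {b} |>.trans (by simp)
  omega

theorem stmt_16 (n : ℕ) (hn : 3 ≤ n) (y : Fin n → ℝ) (hy : y ≠ 0)
    (c : Fin n → Fin n → ℝ) (hc : ∀ j k, c j k = - c k j)
    (α : Fin n → ℝ)
    (h : ∀ l j k : Fin n,
      c j k * y l = α j * (if l = k then 1 else 0) - α k * (if l = j then 1 else 0)) :
    (∀ j k, c j k = 0) ∧ α = 0 := by
  obtain ⟨l₀, hl₀⟩ : ∃ l, y l ≠ 0 := by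
    by_contra hcon
    push_neg at hcon
    exact hy (funext hcon)
  -- c j k = 0 for j,k ≠ l₀
  have hc0 : ∀ j k : Fin n, j ≠ l₀ → k ≠ l₀ → c j k = 0 := by
    intro j k hj hk
    have := h l₀ j k
    rw [if_neg (fun e => hk e.symm), if_neg (fun e => hj e.symm)] at this
    simp at this
    rcases this with h1 | h1
    · exact h1
    · exact absurd h1 hl₀
  -- α j = 0 for j ≠ l₀
  have hα0 : ∀ j : Fin n, j ≠ l₀ → α j = 0 := by
    intro j hj
    obtain ⟨k, hkj, hkl₀⟩ := exists_third n hn j l₀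
    have := h k j k
    rw [if_pos rfl, if_neg hkj, hc0 j k hj hkl₀] at this
    simpa using this.symm
  -- c j l₀ = 0 for j ≠ l₀
  have hc1 : ∀ j : Fin n, j ≠ l₀ → c j l₀ = 0 := by
    intro j hj
    have := h l₀ j l₀
    rw [if_pos rfl, if_neg (fun e => hj e.symm), hα0 j hj] at this
    simp at this
    rcases this with h1 | h1
    · exact h1
    · exact absurd h1 hl₀
  have hcall : ∀ j k, c j k = 0 := by
    intro j k
    by_cases hj : j = l₀
    · by_cases hk : k = l₀
      · rw [hj, hk]
        have := hc l₀ l₀; linarith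
      · rw [hj, hc l₀ k, hc1 k hk]; ring
    · by_cases hk : k = l₀
      · rw [hk]; exact hc1 j hj
      · exact hc0 j k hj hk
  refine ⟨hcall, funext fun k => ?_⟩
  by_cases hk : k = l₀
  · subst hk
    obtain ⟨j, hjk, _⟩ := exists_third n hn k k
    have := h j j k
    rw [if_neg hjk, if_pos rfl, hcall j k, hα0 j hjk] at this
    simpa using this.symm
  · exact hα0 k hk
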